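/- The Pascal triangle, i.e., the matrix P with P(n,k) = C(n,k) for n ≥ k ≥ 0, is an SDR-matrix of order m for every m ≥ 3. -/

import Mathlib

open Finset Nat

/-- `A` is an SDR-matrix of order `m`: the generalized Star of David rule holds for
all `2 ≤ p ≤ m-1` and `0 ≤ r ≤ p-1`. -/
def IsSDR (m : ℕ) (A : ℕ → ℕ → ℕ) : Prop :=
  ∀ n k p r : ℕ, 2 ≤ p → p ≤ m - 1 → r ≤ p - 1 →
    (∏ i ∈ Finset.range (r+1), A (n+i) (k+r-i)) *
      (∏ i ∈ Finset.range (p-r), A (n+p-i) (k+r+i+1)) =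
    (∏ i ∈ Finset.range (r+1), A (n+p-i) (k+p-r+i)) *
      (∏ i ∈ Finset.range (p-r), A (n+i) (k+p-r-i-1))

private lemma pascal_main (n k p r : ℕ) (hr : r + 1 ≤ p) (h1 : k + r ≤ n)
    (h2 : k + p ≤ n + r + 1) :
    (∏ i ∈ Finset.range (r+1), Nat.choose (n+i) (k+r-i)) *
      (∏ i ∈ Finset.range (p-r), Nat.choose (n+p-i) (k+r+i+1)) =
    (∏ i ∈ Finset.range (r+1), Nat.choose (n+p-i) (k+p-r+i)) *
      (∏ i ∈ Finset.range (p-r), Nat.choose (n+i) (k+p-r-i-1)) := by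
  -- factorial identities for each of the four products
  have L1 : (∏ i ∈ Finset.range (r+1), Nat.choose (n+i) (k+r-i)) *
      (∏ i ∈ Finset.range (r+1), (k+r-i)!) *
      (∏ i ∈ Finset.range (r+1), ((n+i)-(k+r-i))!) =
      ∏ i ∈ Finset.range (r+1), (n+i)! := by
    rw [← Finset.prod_mul_distrib, ← Finset.prod_mul_distrib]
    refine Finset.prod_congr rfl fun i hi => ?_
    have hi := Finset.mem_range.mp hi
    exact Nat.choose_mul_factorial_mul_factorial (by omega)
  have L2 : (∏ i ∈ Finset.range (p-r), Nat.choose (n+p-i) (k+r+i+1)) *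
      (∏ i ∈ Finset.range (p-r), (k+r+i+1)!) *
      (∏ i ∈ Finset.range (p-r), ((n+p-i)-(k+r+i+1))!) =
      ∏ i ∈ Finset.range (p-r), (n+p-i)! := by
    rw [← Finset.prod_mul_distrib, ← Finset.prod_mul_distrib]
    refine Finset.prod_congr rfl fun i hi => ?_
    have hi := Finset.mem_range.mp hi
    exact Nat.choose_mul_factorial_mul_factorial (by omega)
  have R1 : (∏ i ∈ Finset.range (r+1), Nat.choose (n+p-i) (k+p-r+i)) *
      (∏ i ∈ Finset.range (r+1), (k+p-r+i)!) *
      (∏ i ∈ Finset.range (r+1), ((n+p-i)-(k+p-r+i))!) =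
      ∏ i ∈ Finset.range (r+1), (n+p-i)! := by
    rw [← Finset.prod_mul_distrib, ← Finset.prod_mul_distrib]
    refine Finset.prod_congr rfl fun i hi => ?_
    have hi := Finset.mem_range.mp hi
    exact Nat.choose_mul_factorial_mul_factorial (by omega)
  have R2 : (∏ i ∈ Finset.range (p-r), Nat.choose (n+i) (k+p-r-i-1)) *
      (∏ i ∈ Finset.range (p-r), (k+p-r-i-1)!) *
      (∏ i ∈ Finset.range (p-r), ((n+i)-(k+p-r-i-1))!) =
      ∏ i ∈ Finset.range (p-r), (n+i)! := by
    rw [← Finset.prod_mul_distrib, ← Finset.prod_mul_distrib]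
    refine Finset.prod_congr rfl fun i hi => ?_
    have hi := Finset.mem_range.mp hi
    exact Nat.choose_mul_factorial_mul_factorial (by omega)
  -- the "bottoms" products agree with the canonical one
  have b1 : (∏ i ∈ Finset.range (r+1), (k+r-i)!) *
      (∏ i ∈ Finset.range (p-r), (k+r+i+1)!) =
      ∏ i ∈ Finset.range (p+1), (k+i)! := by
    have e1 : (∏ i ∈ Finset.range (r+1), (k+r-i)!) =
        ∏ i ∈ Finset.range (r+1), (k+i)! := by
      rw [← Finset.prod_range_reflect (fun j => (k+j)!) (r+1)]
      refine Finset.prod_congr rfl fun i hi => ?_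
      have hi := Finset.mem_range.mp hi
      congr 1; omega
    have e2 : (∏ i ∈ Finset.range (p-r), (k+r+i+1)!) =
        ∏ i ∈ Finset.range (p-r), (k+((r+1)+i))! := by
      refine Finset.prod_congr rfl fun i hi => ?_
      congr 1; omega
    rw [e1, e2, ← Finset.prod_range_add (fun i => (k+i)!) (r+1) (p-r),
      show r+1+(p-r) = p+1 from by omega]
  have b2 : (∏ i ∈ Finset.range (r+1), (k+p-r+i)!) *
      (∏ i ∈ Finset.range (p-r), (k+p-r-i-1)!) =
      ∏ i ∈ Finset.range (p+1), (k+i)! := by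
    have e1 : (∏ i ∈ Finset.range (r+1), (k+p-r+i)!) =
        ∏ i ∈ Finset.range (r+1), (k+((p-r)+i))! := by
      refine Finset.prod_congr rfl fun i hi => ?_
      congr 1; omega
    have e2 : (∏ i ∈ Finset.range (p-r), (k+p-r-i-1)!) =
        ∏ i ∈ Finset.range (p-r), (k+i)! := by
      rw [← Finset.prod_range_reflect (fun j => (k+j)!) (p-r)]
      refine Finset.prod_congr rfl fun i hi => ?_
      have hi := Finset.mem_range.mp hi
      congr 1; omega
    rw [e1, e2, mul_comm, ← Finset.prod_range_add (fun i => (k+i)!) (p-r) (r+1),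
      show p-r+(r+1) = p+1 from by omega]
  -- the "tops" products agree with the canonical one
  have t1 : (∏ i ∈ Finset.range (r+1), (n+i)!) *
      (∏ i ∈ Finset.range (p-r), (n+p-i)!) =
      ∏ i ∈ Finset.range (p+1), (n+i)! := by
    have e2 : (∏ i ∈ Finset.range (p-r), (n+p-i)!) =
        ∏ i ∈ Finset.range (p-r), (n+((r+1)+i))! := by
      rw [← Finset.prod_range_reflect (fun j => (n+((r+1)+j))!) (p-r)]
      refine Finset.prod_congr rfl fun i hi => ?_
      have hi := Finset.mem_range.mp hi
      congr 1; omega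
    rw [e2, ← Finset.prod_range_add (fun i => (n+i)!) (r+1) (p-r),
      show r+1+(p-r) = p+1 from by omega]
  have t2 : (∏ i ∈ Finset.range (r+1), (n+p-i)!) *
      (∏ i ∈ Finset.range (p-r), (n+i)!) =
      ∏ i ∈ Finset.range (p+1), (n+i)! := by
    have e1 : (∏ i ∈ Finset.range (r+1), (n+p-i)!) =
        ∏ i ∈ Finset.range (r+1), (n+((p-r)+i))! := by
      rw [← Finset.prod_range_reflect (fun j => (n+((p-r)+j))!) (r+1)]
      refine Finset.prod_congr rfl fun i hi => ?_
      have hi := Finset.mem_range.mp hi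
      congr 1; omega
    rw [e1, mul_comm, ← Finset.prod_range_add (fun i => (n+i)!) (p-r) (r+1),
      show p-r+(r+1) = p+1 from by omega]
  -- the "differences" products agree
  have d1 : (∏ i ∈ Finset.range (r+1), ((n+i)-(k+r-i))!) =
      ∏ i ∈ Finset.range (r+1), ((n+p-i)-(k+p-r+i))! := by
    rw [← Finset.prod_range_reflect (fun j => ((n+p-j)-(k+p-r+j))!) (r+1)]
    refine Finset.prod_congr rfl fun i hi => ?_
    have hi := Finset.mem_range.mp hi
    congr 1; omega
  have d2 : (∏ i ∈ Finset.range (p-r), ((n+p-i)-(k+r+i+1))!) =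
      ∏ i ∈ Finset.range (p-r), ((n+i)-(k+p-r-i-1))! := by
    rw [← Finset.prod_range_reflect (fun j => ((n+j)-(k+p-r-j-1))!) (p-r)]
    refine Finset.prod_congr rfl fun i hi => ?_
    have hi := Finset.mem_range.mp hi
    congr 1; omega
  -- combine
  set P1 := ∏ i ∈ Finset.range (r+1), Nat.choose (n+i) (k+r-i)
  set P2 := ∏ i ∈ Finset.range (p-r), Nat.choose (n+p-i) (k+r+i+1)
  set Q1 := ∏ i ∈ Finset.range (r+1), Nat.choose (n+p-i) (k+p-r+i)
  set Q2 := ∏ i ∈ Finset.range (p-r), Nat.choose (n+i) (k+p-r-i-1)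
  set B1 := ∏ i ∈ Finset.range (r+1), (k+r-i)!
  set B2 := ∏ i ∈ Finset.range (p-r), (k+r+i+1)!
  set C1 := ∏ i ∈ Finset.range (r+1), (k+p-r+i)!
  set C2 := ∏ i ∈ Finset.range (p-r), (k+p-r-i-1)!
  set D1 := ∏ i ∈ Finset.range (r+1), ((n+i)-(k+r-i))!
  set D2 := ∏ i ∈ Finset.range (p-r), ((n+p-i)-(k+r+i+1))!
  set E1 := ∏ i ∈ Finset.range (r+1), ((n+p-i)-(k+p-r+i))!
  set E2 := ∏ i ∈ Finset.range (p-r), ((n+i)-(k+p-r-i-1))!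
  have hM : (0:ℕ) < C1 * C2 * (E1 * E2) := by
    have h1 : 0 < C1 := Finset.prod_pos fun i _ => Nat.factorial_pos _
    have h2 : 0 < C2 := Finset.prod_pos fun i _ => Nat.factorial_pos _
    have h3 : 0 < E1 := Finset.prod_pos fun i _ => Nat.factorial_pos _
    have h4 : 0 < E2 := Finset.prod_pos fun i _ => Nat.factorial_pos _
    positivity
  have key : (P1 * P2) * (C1 * C2 * (E1 * E2)) = (Q1 * Q2) * (C1 * C2 * (E1 * E2)) := by
    have hL : (P1 * P2) * (C1 * C2 * (E1 * E2)) =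
        (P1 * B1 * D1) * (P2 * B2 * D2) := by
      rw [b2, ← b1, ← d1, ← d2]; ring
    have hR : (Q1 * Q2) * (C1 * C2 * (E1 * E2)) =
        (Q1 * C1 * E1) * (Q2 * C2 * E2) := by ring
    rw [hL, hR, L1, L2, R1, R2, t1, t2]
  exact Nat.eq_of_mul_eq_mul_right hM key

private lemma pascal_key (n k p r : ℕ) (hr : r + 1 ≤ p) :
    (∏ i ∈ Finset.range (r+1), Nat.choose (n+i) (k+r-i)) *
      (∏ i ∈ Finset.range (p-r), Nat.choose (n+p-i) (k+r+i+1)) =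
    (∏ i ∈ Finset.range (r+1), Nat.choose (n+p-i) (k+p-r+i)) *
      (∏ i ∈ Finset.range (p-r), Nat.choose (n+i) (k+p-r-i-1)) := by
  by_cases h1 : k + r ≤ n
  · by_cases h2 : k + p ≤ n + r + 1
    · exact pascal_main n k p r hr h1 h2
    · have hL : (∏ i ∈ Finset.range (p-r), Nat.choose (n+p-i) (k+r+i+1)) = 0 := by
        refine Finset.prod_eq_zero (Finset.mem_range.mpr (show p-r-1 < p-r by omega)) ?_
        exact Nat.choose_eq_zero_of_lt (by omega)
      have hR : (∏ i ∈ Finset.range (p-r), Nat.choose (n+i) (k+p-r-i-1)) = 0 := by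
        refine Finset.prod_eq_zero (Finset.mem_range.mpr (show 0 < p-r by omega)) ?_
        exact Nat.choose_eq_zero_of_lt (by omega)
      rw [hL, hR, mul_zero, mul_zero]
  · have hL : (∏ i ∈ Finset.range (r+1), Nat.choose (n+i) (k+r-i)) = 0 := by
      refine Finset.prod_eq_zero (Finset.mem_range.mpr (show 0 < r+1 by omega)) ?_
      exact Nat.choose_eq_zero_of_lt (by omega)
    have hR : (∏ i ∈ Finset.range (r+1), Nat.choose (n+p-i) (k+p-r+i)) = 0 := by
      refine Finset.prod_eq_zero (Finset.mem_range.mpr (show r < r+1 by omega)) ?_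
      exact Nat.choose_eq_zero_of_lt (by omega)
    rw [hL, hR, zero_mul, zero_mul]

theorem pascal_isSDR (m : ℕ) (hm : 3 ≤ m) :
    IsSDR m (fun n k => Nat.choose n k) := by
  intro n k p r hp hpm hr
  exact pascal_key n k p r (by omega)
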